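/- (Tanaka inequality.) Let A > 0 and let ñ, m̃ be probability measures on ℝ with finite second moments such that ∫ y dñ(y) = ∫ y dm̃(y). Then W₂(T(ñ), T(m̃)) ≤ (1/√2) · W₂(ñ, m̃). -/

import Mathlib

open MeasureTheory Real
open scoped ENNReal

noncomputable section

/-- Gaussian density `Γ_v(y) = (2πv)^{-1/2} exp(-y²/(2v))`. -/
def gaussianD (v y : ℝ) : ℝ := (2 * π * v) ^ (-(1:ℝ)/2) * Real.exp (-(y ^ 2) / (2 * v))

/-- Couplings (transference plans) between two measures on `ℝ`. -/
def Couplings (μ ν : Measure ℝ) : Set (Measure (ℝ × ℝ)) :=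
  {plan | IsProbabilityMeasure plan ∧ plan.map Prod.fst = μ ∧ plan.map Prod.snd = ν}

/-- Wasserstein distance `W_p` (valued in `ℝ≥0∞`). -/
def Wass (p : ℝ) (μ ν : Measure ℝ) : ℝ≥0∞ :=
  ⨅ plan ∈ Couplings μ ν, (∫⁻ q : ℝ × ℝ, ENNReal.ofReal (|q.1 - q.2| ^ p) ∂plan) ^ (1/p)

/-- The measure on `ℝ` with density `f` with respect to Lebesgue measure. -/
def densToMeasure (f : ℝ → ℝ) : Measure ℝ :=
  volume.withDensity fun y => ENNReal.ofReal (f y)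

/-- The infinitesimal operator `T` on probability measures: `T(ñ)` is the measure with
Lebesgue density `y ↦ ∫∫ Γ_{A/2}(y - (y₊+y₊')/2) dñ(y₊) dñ(y₊')`. -/
def Tmeas (A : ℝ) (μ : Measure ℝ) : Measure ℝ :=
  volume.withDensity fun y =>
    ∫⁻ p : ℝ × ℝ, ENNReal.ofReal (gaussianD (A/2) (y - (p.1 + p.2)/2)) ∂(μ.prod μ)

/-- The density of the infinitesimal operator applied to a probability measure:
`T(ñ)(y) = ∫∫ Γ_{A/2}(y - (y₊+y₊')/2) dñ(y₊) dñ(y₊')`. -/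
def Tfun (A : ℝ) (μ : Measure ℝ) (y : ℝ) : ℝ :=
  ∫ p : ℝ × ℝ, gaussianD (A/2) (y - (p.1 + p.2)/2) ∂(μ.prod μ)

end

noncomputable section
open ProbabilityTheory

lemma gaussianD_eq (v : ℝ) (hv : 0 < v) (y : ℝ) :
    gaussianD v y = gaussianPDFReal 0 v.toNNReal y := by
  have h2v : (0:ℝ) < 2 * π * v := by positivity
  rw [gaussianD, gaussianPDFReal]
  rw [Real.coe_toNNReal _ hv.le]
  rw [show (-(1:ℝ)/2) = -(1/2) by ring, Real.rpow_neg h2v.le, ← Real.sqrt_eq_rpow]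
  ring_nf

lemma measurable_gaussianD (v : ℝ) : Measurable (gaussianD v) := by
  unfold gaussianD
  fun_prop

lemma law_eq (v : ℝ) (hv : 0 < v) (ρ : Measure (ℝ×ℝ)) [IsProbabilityMeasure ρ]
    (c : ℝ×ℝ → ℝ) (hc : Measurable c) :
    ((gaussianReal 0 v.toNNReal).prod ρ).map (fun q : ℝ × (ℝ×ℝ) => q.1 + c q.2)
      = volume.withDensity (fun y => ∫⁻ p, ENNReal.ofReal (gaussianD v (y - c p)) ∂ρ) := by
  have hv' : v.toNNReal ≠ 0 := by simp [Real.toNNReal_eq_zero]; linarith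
  have hgauss : gaussianReal 0 v.toNNReal
      = volume.withDensity (fun y => ENNReal.ofReal (gaussianD v y)) := by
    rw [gaussianReal_of_var_ne_zero _ hv']
    congr 1
    ext y
    rw [gaussianPDF_def, gaussianD_eq v hv]
  have hmeas : Measurable (fun q : ℝ × (ℝ×ℝ) => q.1 + c q.2) :=
    measurable_fst.add (hc.comp measurable_snd)
  ext s hs
  rw [Measure.map_apply hmeas hs, withDensity_apply _ hs]
  rw [Measure.prod_apply_symm (hmeas hs)]
  have step : ∀ p : ℝ × ℝ, (gaussianReal 0 v.toNNReal) ((fun x => (x, p)) ⁻¹' ((fun q : ℝ × (ℝ×ℝ) => q.1 + c q.2) ⁻¹' s))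
      = ∫⁻ y in s, ENNReal.ofReal (gaussianD v (y - c p)) := by
    intro p
    have hpre : ((fun x => (x, p)) ⁻¹' ((fun q : ℝ × (ℝ×ℝ) => q.1 + c q.2) ⁻¹' s))
        = (fun x : ℝ => x + c p) ⁻¹' s := rfl
    rw [hpre, hgauss, withDensity_apply _ (hs.preimage (measurable_add_const _))]
    have : ∫⁻ x in (fun x : ℝ => x + c p) ⁻¹' s, ENNReal.ofReal (gaussianD v x)
        = ∫⁻ x, ((fun x : ℝ => x + c p) ⁻¹' s).indicator (fun x => ENNReal.ofReal (gaussianD v x)) x := by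
      rw [lintegral_indicator (hs.preimage (measurable_add_const _))]
    rw [this]
    have key : ∀ x : ℝ, ((fun x : ℝ => x + c p) ⁻¹' s).indicator (fun x => ENNReal.ofReal (gaussianD v x)) x
        = s.indicator (fun y => ENNReal.ofReal (gaussianD v (y - c p))) (x + c p) := by
      intro x
      by_cases hx : x + c p ∈ s <;>
        simp [Set.indicator, hx, Set.mem_preimage]
    simp_rw [key]
    rw [lintegral_add_right_eq_self (fun y => s.indicator (fun y => ENNReal.ofReal (gaussianD v (y - c p))) y) (c p)]
    rw [lintegral_indicator hs]
  simp_rw [step]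
  -- now swap ∫⁻ p ∫⁻ y in s  to  ∫⁻ y in s ∫⁻ p
  have hmeas2 : Measurable (Function.uncurry fun (p : ℝ×ℝ) (y : ℝ) =>
      ENNReal.ofReal (gaussianD v (y - c p))) :=
    (((measurable_gaussianD v).comp (measurable_snd.sub (hc.comp measurable_fst)))).ennreal_ofReal
  rw [lintegral_lintegral_swap hmeas2.aemeasurable]

section Marginals
variable (v : ℝ) (pp : Measure (ℝ×ℝ)) [IsProbabilityMeasure pp]

def cfun : ℝ×ℝ → ℝ := fun p => (p.1 + p.2)/2

lemma cfun_meas : Measurable cfun := by unfold cfun; fun_prop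

def Φ : ℝ × ((ℝ×ℝ)×(ℝ×ℝ)) → ℝ×ℝ :=
  fun z => (z.1 + cfun (z.2.1.1, z.2.2.1), z.1 + cfun (z.2.1.2, z.2.2.2))

lemma Φ_meas : Measurable Φ := by unfold Φ cfun; fun_prop

lemma marg_fst (hv : 0 < v) (μ : Measure ℝ) [IsProbabilityMeasure μ]
    (hpp : pp.map Prod.fst = μ) :
    (((gaussianReal 0 v.toNNReal).prod (pp.prod pp)).map Φ).map Prod.fst
      = volume.withDensity
          (fun y => ∫⁻ p, ENNReal.ofReal (gaussianD v (y - cfun p)) ∂(μ.prod μ)) := by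
  have h1 : (((gaussianReal 0 v.toNNReal).prod (pp.prod pp)).map Φ).map Prod.fst
      = ((gaussianReal 0 v.toNNReal).prod (pp.prod pp)).map (Prod.fst ∘ Φ) :=
    Measure.map_map measurable_fst Φ_meas
  have h2 : (Prod.fst ∘ Φ) = (fun q : ℝ × (ℝ×ℝ) => q.1 + cfun q.2) ∘
      (Prod.map id (Prod.map Prod.fst Prod.fst)) := rfl
  have hψ : Measurable (Prod.map (id : ℝ → ℝ) (Prod.map (Prod.fst : ℝ×ℝ → ℝ) Prod.fst)) :=
    measurable_id.prodMap ((measurable_fst : Measurable (Prod.fst : ℝ×ℝ → ℝ)).prodMap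
      (measurable_fst : Measurable (Prod.fst : ℝ×ℝ → ℝ)))
  have h3 : ((gaussianReal 0 v.toNNReal).prod (pp.prod pp)).map
        (Prod.map (id : ℝ → ℝ) (Prod.map (Prod.fst : ℝ×ℝ → ℝ) Prod.fst))
      = (gaussianReal 0 v.toNNReal).prod (μ.prod μ) := by
    rw [← Measure.map_prod_map _ _ measurable_id (measurable_fst.prodMap measurable_fst),
        ← Measure.map_prod_map _ _ measurable_fst measurable_fst, hpp, Measure.map_id]
  have h4 : (((gaussianReal 0 v.toNNReal).prod (pp.prod pp)).map
        (Prod.map (id : ℝ → ℝ) (Prod.map (Prod.fst : ℝ×ℝ → ℝ) Prod.fst))).map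
        (fun q : ℝ × (ℝ×ℝ) => q.1 + cfun q.2)
      = ((gaussianReal 0 v.toNNReal).prod (pp.prod pp)).map
        ((fun q : ℝ × (ℝ×ℝ) => q.1 + cfun q.2) ∘ (Prod.map id (Prod.map Prod.fst Prod.fst))) :=
    Measure.map_map (measurable_fst.add (cfun_meas.comp measurable_snd)) hψ
  rw [h1, h2, ← h4, h3, law_eq v hv _ cfun cfun_meas]

lemma marg_snd (hv : 0 < v) (ν : Measure ℝ) [IsProbabilityMeasure ν]
    (hpp : pp.map Prod.snd = ν) :
    (((gaussianReal 0 v.toNNReal).prod (pp.prod pp)).map Φ).map Prod.snd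
      = volume.withDensity
          (fun y => ∫⁻ p, ENNReal.ofReal (gaussianD v (y - cfun p)) ∂(ν.prod ν)) := by
  have h1 : (((gaussianReal 0 v.toNNReal).prod (pp.prod pp)).map Φ).map Prod.snd
      = ((gaussianReal 0 v.toNNReal).prod (pp.prod pp)).map (Prod.snd ∘ Φ) :=
    Measure.map_map measurable_snd Φ_meas
  have h2 : (Prod.snd ∘ Φ) = (fun q : ℝ × (ℝ×ℝ) => q.1 + cfun q.2) ∘
      (Prod.map id (Prod.map Prod.snd Prod.snd)) := rfl
  have hψ : Measurable (Prod.map (id : ℝ → ℝ) (Prod.map (Prod.snd : ℝ×ℝ → ℝ) Prod.snd)) :=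
    measurable_id.prodMap ((measurable_snd : Measurable (Prod.snd : ℝ×ℝ → ℝ)).prodMap
      (measurable_snd : Measurable (Prod.snd : ℝ×ℝ → ℝ)))
  have h3 : ((gaussianReal 0 v.toNNReal).prod (pp.prod pp)).map
        (Prod.map (id : ℝ → ℝ) (Prod.map (Prod.snd : ℝ×ℝ → ℝ) Prod.snd))
      = (gaussianReal 0 v.toNNReal).prod (ν.prod ν) := by
    rw [← Measure.map_prod_map _ _ measurable_id (measurable_snd.prodMap measurable_snd),
        ← Measure.map_prod_map _ _ measurable_snd measurable_snd, hpp, Measure.map_id]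
  have h4 : (((gaussianReal 0 v.toNNReal).prod (pp.prod pp)).map
        (Prod.map (id : ℝ → ℝ) (Prod.map (Prod.snd : ℝ×ℝ → ℝ) Prod.snd))).map
        (fun q : ℝ × (ℝ×ℝ) => q.1 + cfun q.2)
      = ((gaussianReal 0 v.toNNReal).prod (pp.prod pp)).map
        ((fun q : ℝ × (ℝ×ℝ) => q.1 + cfun q.2) ∘ (Prod.map id (Prod.map Prod.snd Prod.snd))) :=
    Measure.map_map (measurable_fst.add (cfun_meas.comp measurable_snd)) hψ
  rw [h1, h2, ← h4, h3, law_eq v hv _ cfun cfun_meas]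

end Marginals

section Cost
variable (v : ℝ) (pp : Measure (ℝ×ℝ)) [IsProbabilityMeasure pp]

def Dfun : ℝ×ℝ → ℝ := fun q => q.1 - q.2

lemma Dfun_meas : Measurable Dfun := by unfold Dfun; fun_prop

lemma abs_rpow_two (x : ℝ) : |x| ^ (2:ℝ) = x^2 := by
  rw [show (2:ℝ) = ((2:ℕ):ℝ) by norm_num, Real.rpow_natCast]
  exact sq_abs x

lemma cost_map :
    ∫⁻ q : ℝ×ℝ, ENNReal.ofReal (|q.1 - q.2| ^ (2:ℝ))
        ∂(((gaussianReal 0 v.toNNReal).prod (pp.prod pp)).map Φ)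
      = ∫⁻ w : (ℝ×ℝ)×(ℝ×ℝ), ENNReal.ofReal (((Dfun w.1 + Dfun w.2)/2)^2) ∂(pp.prod pp) := by
  have hint : Measurable (fun q : ℝ×ℝ => ENNReal.ofReal (|q.1 - q.2| ^ (2:ℝ))) := by fun_prop
  rw [lintegral_map hint Φ_meas]
  have heq : ∀ z : ℝ × ((ℝ×ℝ)×(ℝ×ℝ)),
      ENNReal.ofReal (|(Φ z).1 - (Φ z).2| ^ (2:ℝ))
        = ENNReal.ofReal (((Dfun z.2.1 + Dfun z.2.2)/2)^2) := by
    intro z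
    rw [abs_rpow_two]
    congr 1
    simp only [Φ, cfun, Dfun]
    ring
  simp_rw [heq]
  rw [lintegral_prod _ (by
    apply Measurable.aemeasurable
    apply Measurable.ennreal_ofReal
    exact (((Dfun_meas.comp (measurable_fst.comp measurable_snd)).add
      (Dfun_meas.comp (measurable_snd.comp measurable_snd))).div_const 2).pow_const 2)]
  simp [lintegral_const]
end Cost

section Key
variable (pp : Measure (ℝ×ℝ)) [IsProbabilityMeasure pp]

lemma integrable_of_lintegral_lt {α : Type*} [MeasurableSpace α] (m : Measure α)
    (f : α → ℝ) (hf : Measurable f) (hnn : ∀ x, 0 ≤ f x)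
    (h : ∫⁻ x, ENNReal.ofReal (f x) ∂m < ⊤) : Integrable f m := by
  refine ⟨hf.aestronglyMeasurable, ?_⟩
  rw [hasFiniteIntegral_iff_ofReal (Filter.Eventually.of_forall hnn)]
  exact h

lemma key_integral (hD : ∫ q, Dfun q ∂pp = 0) (hD2 : Integrable (fun q => Dfun q ^ 2) pp)
    (hD1 : Integrable Dfun pp) :
    ∫⁻ w : (ℝ×ℝ)×(ℝ×ℝ), ENNReal.ofReal (((Dfun w.1 + Dfun w.2)/2)^2) ∂(pp.prod pp)
      = ENNReal.ofReal ((1/2) * ∫ q, Dfun q ^ 2 ∂pp) := by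
  have e : (fun w : (ℝ×ℝ)×(ℝ×ℝ) => ((Dfun w.1 + Dfun w.2)/2)^2)
      = fun w => ((fun q => Dfun q^2/4) w.1 * (fun _ => (1:ℝ)) w.2)
        + (((fun q => Dfun q/2) w.1 * (fun q => Dfun q) w.2)
          + ((fun _ => (1:ℝ)) w.1 * (fun q => Dfun q^2/4) w.2)) := by
    funext w; ring
  have t1 : Integrable (fun w : (ℝ×ℝ)×(ℝ×ℝ) =>
      (fun q => Dfun q^2/4) w.1 * (fun _ => (1:ℝ)) w.2) (pp.prod pp) :=
    (hD2.div_const 4).mul_prod (integrable_const 1)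
  have t2 : Integrable (fun w : (ℝ×ℝ)×(ℝ×ℝ) =>
      (fun q => Dfun q/2) w.1 * (fun q => Dfun q) w.2) (pp.prod pp) :=
    (hD1.div_const 2).mul_prod hD1
  have t3 : Integrable (fun w : (ℝ×ℝ)×(ℝ×ℝ) =>
      (fun _ => (1:ℝ)) w.1 * (fun q => Dfun q^2/4) w.2) (pp.prod pp) :=
    (integrable_const 1).mul_prod (hD2.div_const 4)
  have hint : Integrable (fun w : (ℝ×ℝ)×(ℝ×ℝ) => ((Dfun w.1 + Dfun w.2)/2)^2) (pp.prod pp) := by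
    rw [e]; exact t1.add (t2.add t3)
  rw [← ofReal_integral_eq_lintegral_ofReal hint
      (Filter.Eventually.of_forall (fun w => sq_nonneg _))]
  congr 1
  have t23 : Integrable (fun w : (ℝ×ℝ)×(ℝ×ℝ) =>
      (fun q => Dfun q/2) w.1 * (fun q => Dfun q) w.2
        + (fun _ => (1:ℝ)) w.1 * (fun q => Dfun q^2/4) w.2) (pp.prod pp) := t2.add t3
  have i1 : ∫ (w : (ℝ×ℝ)×(ℝ×ℝ)), (fun q => Dfun q^2/4) w.1 * (fun _ => (1:ℝ)) w.2 ∂(pp.prod pp)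
      = (∫ q, Dfun q^2/4 ∂pp) * (∫ _, (1:ℝ) ∂pp) := integral_prod_mul (L := ℝ) (fun q => Dfun q^2/4) (fun _ => (1:ℝ))
  have i2 : ∫ (w : (ℝ×ℝ)×(ℝ×ℝ)), (fun q => Dfun q/2) w.1 * (fun q => Dfun q) w.2 ∂(pp.prod pp)
      = (∫ q, Dfun q/2 ∂pp) * (∫ q, Dfun q ∂pp) := integral_prod_mul (L := ℝ) (fun q => Dfun q/2) Dfun
  have i3 : ∫ (w : (ℝ×ℝ)×(ℝ×ℝ)), (fun _ => (1:ℝ)) w.1 * (fun q => Dfun q^2/4) w.2 ∂(pp.prod pp)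
      = (∫ _, (1:ℝ) ∂pp) * (∫ q, Dfun q^2/4 ∂pp) := integral_prod_mul (L := ℝ) (fun _ => (1:ℝ)) (fun q => Dfun q^2/4)
  rw [e, integral_add t1 t23, integral_add t2 t3, i1, i2, i3, hD]
  simp only [integral_const, measure_univ, probReal_univ, ENNReal.toReal_one, one_smul, smul_eq_mul,
    integral_div]
  ring

end Key

lemma int_coord (pl : Measure (ℝ×ℝ)) [IsProbabilityMeasure pl] (f : ℝ×ℝ → ℝ)
    (hf : Measurable f) (μ : Measure ℝ) (h1 : pl.map f = μ)
    (hμ : ∫⁻ y, ENNReal.ofReal (y^2) ∂μ < ⊤) :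
    Integrable f pl ∧ ∫ q, f q ∂pl = ∫ y, y ∂μ := by
  have hsq : Integrable (fun q => f q^2) pl := by
    apply integrable_of_lintegral_lt _ _ (hf.pow_const 2) (fun x => sq_nonneg _)
    have h2 : ∫⁻ q, ENNReal.ofReal (f q ^ 2) ∂pl
        = ∫⁻ y, ENNReal.ofReal (y^2) ∂(pl.map f) := by
      rw [lintegral_map (by fun_prop) hf]
    rw [h2, h1]; exact hμ
  have hint : Integrable f pl := by
    apply Integrable.mono' (hsq.add (integrable_const 1)) hf.aestronglyMeasurable
    filter_upwards with q
    simp only [Real.norm_eq_abs, Pi.add_apply]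
    nlinarith [sq_nonneg (|f q| - 1), abs_nonneg (f q), sq_abs (f q)]
  refine ⟨hint, ?_⟩
  rw [← h1]
  exact (integral_map hf.aemeasurable (f := fun y : ℝ => y)
    measurable_id.aestronglyMeasurable).symm

end

/-- Theorem 4.1 (a Tanaka inequality): if `ñ` and `m̃` are probability measures on `ℝ` with
finite second moments and equal means, then `W₂(T(ñ), T(m̃)) ≤ W₂(ñ, m̃)/√2`. -/
theorem tanaka_inequality (A : ℝ) (hA : 0 < A) (μ ν : Measure ℝ)
    [IsProbabilityMeasure μ] [IsProbabilityMeasure ν]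
    (hμ : (∫⁻ y : ℝ, ENNReal.ofReal (y ^ 2) ∂μ) < ⊤)
    (hν : (∫⁻ y : ℝ, ENNReal.ofReal (y ^ 2) ∂ν) < ⊤)
    (hmean : (∫ y, y ∂μ) = ∫ y, y ∂ν) :
    Wass 2 (Tmeas A μ) (Tmeas A ν) ≤ ENNReal.ofReal (1 / Real.sqrt 2) * Wass 2 μ ν := by
  have hv : 0 < A/2 := by linarith
  set c : ℝ≥0∞ := ENNReal.ofReal (1 / Real.sqrt 2) with hc
  have hc0 : c ≠ 0 := by
    rw [hc, Ne, ENNReal.ofReal_eq_zero, not_le]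
    positivity
  have hctop : c ≠ ⊤ := ENNReal.ofReal_ne_top
  have hTμ : Tmeas A μ = volume.withDensity
      (fun y => ∫⁻ p, ENNReal.ofReal (gaussianD (A/2) (y - cfun p)) ∂(μ.prod μ)) := rfl
  have hTν : Tmeas A ν = volume.withDensity
      (fun y => ∫⁻ p, ENNReal.ofReal (gaussianD (A/2) (y - cfun p)) ∂(ν.prod ν)) := rfl
  have main : ∀ pl ∈ Couplings μ ν,
      Wass 2 (Tmeas A μ) (Tmeas A ν) ≤ c *
        ((∫⁻ q : ℝ×ℝ, ENNReal.ofReal (|q.1 - q.2| ^ (2:ℝ)) ∂pl) ^ (1/(2:ℝ))) := by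
    rintro pl ⟨hprob, h1, h2⟩
    haveI := hprob
    set plan := ((ProbabilityTheory.gaussianReal 0 (A/2).toNNReal).prod (pl.prod pl)).map Φ
      with hplan
    haveI hplanP : IsProbabilityMeasure plan := Measure.isProbabilityMeasure_map Φ_meas.aemeasurable
    have hmem : plan ∈ Couplings (Tmeas A μ) (Tmeas A ν) := by
      refine ⟨hplanP, ?_, ?_⟩
      · rw [hplan, marg_fst (A/2) pl hv μ h1, hTμ]
      · rw [hplan, marg_snd (A/2) pl hv ν h2, hTν]
    have hW : Wass 2 (Tmeas A μ) (Tmeas A ν)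
        ≤ (∫⁻ q : ℝ×ℝ, ENNReal.ofReal (|q.1 - q.2| ^ (2:ℝ)) ∂plan) ^ (1/(2:ℝ)) := by
      rw [Wass]
      exact iInf₂_le plan hmem
    rw [hplan, cost_map (A/2) pl] at hW
    by_cases hC : (∫⁻ q : ℝ×ℝ, ENNReal.ofReal (|q.1 - q.2| ^ (2:ℝ)) ∂pl) = ⊤
    · rw [hC, ENNReal.top_rpow_of_pos (by norm_num), ENNReal.mul_top hc0]
      exact le_top
    have hx1 := int_coord pl (fun q => q.1) measurable_fst μ h1 hμ
    have hx2 := int_coord pl (fun q => q.2) measurable_snd ν h2 hν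
    have habs : ∀ q : ℝ×ℝ, ENNReal.ofReal (|q.1 - q.2| ^ (2:ℝ))
        = ENNReal.ofReal (Dfun q ^ 2) := fun q => by rw [abs_rpow_two]; rfl
    have hD2 : Integrable (fun q => Dfun q ^ 2) pl := by
      apply integrable_of_lintegral_lt _ _ (Dfun_meas.pow_const 2) (fun x => sq_nonneg _)
      simp_rw [← habs]
      exact lt_top_iff_ne_top.mpr hC
    have hD1 : Integrable Dfun pl := hx1.1.sub hx2.1
    have hD : ∫ q, Dfun q ∂pl = 0 := by
      have hsub := integral_sub hx1.1 hx2.1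
      unfold Dfun
      rw [hsub, hx1.2, hx2.2, hmean, sub_self]
    rw [key_integral pl hD hD2 hD1] at hW
    have hI2 : 0 ≤ ∫ q, Dfun q ^ 2 ∂pl := integral_nonneg fun q => sq_nonneg _
    have hCq : (∫⁻ q : ℝ×ℝ, ENNReal.ofReal (|q.1 - q.2| ^ (2:ℝ)) ∂pl)
        = ENNReal.ofReal (∫ q, Dfun q ^ 2 ∂pl) := by
      simp_rw [habs]
      rw [← ofReal_integral_eq_lintegral_ofReal hD2
        (Filter.Eventually.of_forall fun q => sq_nonneg _)]
    refine hW.trans ?_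
    rw [hCq,
      ENNReal.ofReal_rpow_of_nonneg
        (by linarith : (0:ℝ) ≤ 1/2 * ∫ q, Dfun q ^ 2 ∂pl) (by norm_num : (0:ℝ) ≤ 1/2),
      ENNReal.ofReal_rpow_of_nonneg hI2 (by norm_num : (0:ℝ) ≤ 1/2),
      hc, ← ENNReal.ofReal_mul (by positivity)]
    apply ENNReal.ofReal_le_ofReal
    rw [← Real.sqrt_eq_rpow, ← Real.sqrt_eq_rpow,
      show (1/2 : ℝ) * ∫ q, Dfun q ^ 2 ∂pl = (∫ q, Dfun q ^ 2 ∂pl) / 2 by ring,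
      Real.sqrt_div hI2, div_eq_mul_inv, one_div, mul_comm]
  have step : Wass 2 (Tmeas A μ) (Tmeas A ν)
      ≤ ⨅ pl ∈ Couplings μ ν,
          c * ((∫⁻ q : ℝ×ℝ, ENNReal.ofReal (|q.1 - q.2| ^ (2:ℝ)) ∂pl) ^ (1/(2:ℝ))) :=
    le_iInf fun pl => le_iInf fun h => main pl h
  refine step.trans ?_
  rw [Wass]
  simp_rw [← ENNReal.mul_iInf_of_ne hc0 hctop]
  exact le_rfl
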